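/- If the kernel is bounded, sup_{x∈𝒳} k(x, x) ≤ C for some C < ∞, then the maximum mean discrepancy is dominated by the total variation distance: ‖μ_P − μ_Q‖_H ≤ √C · |P − Q|(𝒳), where |P − Q| denotes the total variation measure of the signed measure P − Q. -/

import Mathlib

open MeasureTheory
open scoped RealInnerProductSpace

/-- **MMD is dominated by the total variation distance:** if the kernel is bounded,
`k(x,x) = ⟪φ x, φ x⟫ ≤ C` for all `x`, then
`‖μ_P − μ_Q‖_H ≤ √C · |P − Q|(𝒳)`, where `|P − Q|` is the total variation measure
of the signed measure `P − Q`. -/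
theorem mmd_le_sqrt_mul_totalVariation
    {𝒳 : Type*} [MeasurableSpace 𝒳]
    {H : Type*} [NormedAddCommGroup H] [InnerProductSpace ℝ H] [CompleteSpace H]
    (φ : 𝒳 → H) (hφ : StronglyMeasurable φ)
    (P Q : Measure 𝒳) [IsProbabilityMeasure P] [IsProbabilityMeasure Q]
    (C : ℝ) (hC : ∀ x, ⟪φ x, φ x⟫ ≤ C) :
    ‖(∫ x, φ x ∂P) - ∫ x, φ x ∂Q‖
      ≤ Real.sqrt C *
        ((P.toSignedMeasure - Q.toSignedMeasure).totalVariation Set.univ).toReal := by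
  set s := P.toSignedMeasure - Q.toSignedMeasure with hs
  set j := s.toJordanDecomposition with hj
  -- bound on ‖φ x‖
  have hnorm : ∀ x, ‖φ x‖ ≤ Real.sqrt C := by
    intro x
    have h1 : ‖φ x‖ = Real.sqrt ⟪φ x, φ x⟫ := by
      rw [real_inner_self_eq_norm_sq, Real.sqrt_sq (norm_nonneg _)]
    rw [h1]
    exact Real.sqrt_le_sqrt (hC x)
  -- integrability w.r.t. any finite measure
  have hInt : ∀ (μ : Measure 𝒳) [IsFiniteMeasure μ], Integrable φ μ := by
    intro μ _
    exact ⟨hφ.aestronglyMeasurable,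
      HasFiniteIntegral.of_bounded (C := Real.sqrt C) (Filter.Eventually.of_forall hnorm)⟩
  -- measure identity from Jordan decomposition
  have hJD : j.posPart.toSignedMeasure - j.negPart.toSignedMeasure = s :=
    SignedMeasure.toSignedMeasure_toJordanDecomposition s
  have hmeas : P + j.negPart = j.posPart + Q := by
    rw [← Measure.toSignedMeasure_eq_toSignedMeasure_iff,
      Measure.toSignedMeasure_add, Measure.toSignedMeasure_add]
    have h2 := hJD
    rw [hs] at h2
    exact (sub_eq_sub_iff_add_eq_add.mp h2).symm
  -- integral identity
  have hint_eq : (∫ x, φ x ∂P) + ∫ x, φ x ∂j.negPart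
      = (∫ x, φ x ∂j.posPart) + ∫ x, φ x ∂Q := by
    rw [← integral_add_measure (hInt P) (hInt j.negPart),
      ← integral_add_measure (hInt j.posPart) (hInt Q), hmeas]
  have hdiff : (∫ x, φ x ∂P) - ∫ x, φ x ∂Q
      = (∫ x, φ x ∂j.posPart) - ∫ x, φ x ∂j.negPart := by
    exact sub_eq_sub_iff_add_eq_add.mpr hint_eq
  rw [hdiff]
  have hb : ∀ (μ : Measure 𝒳) [IsFiniteMeasure μ],
      ‖∫ x, φ x ∂μ‖ ≤ Real.sqrt C * (μ Set.univ).toReal := by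
    intro μ _
    calc ‖∫ x, φ x ∂μ‖ ≤ ∫ x, ‖φ x‖ ∂μ := norm_integral_le_integral_norm _
      _ ≤ ∫ _, Real.sqrt C ∂μ :=
        integral_mono (hInt μ).norm (integrable_const _) hnorm
      _ = Real.sqrt C * (μ Set.univ).toReal := by
        rw [integral_const, smul_eq_mul, mul_comm, measureReal_def]
  have hTV : (s.totalVariation Set.univ).toReal
      = (j.posPart Set.univ).toReal + (j.negPart Set.univ).toReal := by
    rw [SignedMeasure.totalVariation, Measure.add_apply, ENNReal.toReal_add
      (measure_ne_top _ _) (measure_ne_top _ _)]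
  calc ‖(∫ x, φ x ∂j.posPart) - ∫ x, φ x ∂j.negPart‖
      ≤ ‖∫ x, φ x ∂j.posPart‖ + ‖∫ x, φ x ∂j.negPart‖ := norm_sub_le _ _
    _ ≤ Real.sqrt C * (j.posPart Set.univ).toReal
        + Real.sqrt C * (j.negPart Set.univ).toReal := by
        exact add_le_add (hb j.posPart) (hb j.negPart)
    _ = Real.sqrt C * (s.totalVariation Set.univ).toReal := by
        rw [hTV]; ring
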